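/- Let $H$ be a finite-dimensional Hilbert space, $X$ a finite-dimensional Banach space, and $\phi, \psi \in \mathcal{L}(X^*, H)$ linear operators such that for every $x^* \in X^*$ one has $\|\psi x^*\| \leq \|\phi x^*\|$ and $\langle \psi x^*, \phi x^* \rangle = 0$. Then there exists $A \in \mathcal{L}(H)$ with $\|A\| \leq 1$ such that $\psi = A\phi$ and $P A$ is skew-symmetric, where $P$ is the orthogonal projection onto $\mathrm{Ran}(\phi)$. -/

import Mathlib

open scoped RealInnerProductSpace

/-- Let `H` be a finite-dimensional Hilbert space, `X` a
finite-dimensional Banach space, and `φ, ψ : X* → H` linear operators such that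
`‖ψ x*‖ ≤ ‖φ x*‖` and `⟪ψ x*, φ x*⟫ = 0` for all `x*`. Then there is `A : H → H`
with `‖A‖ ≤ 1`, `ψ = A ∘ φ`, and `P A` skew-symmetric, where `P` is the orthogonal
projection onto `Ran φ`. -/
theorem exists_contraction_skew_symmetric
    {H X : Type*} [NormedAddCommGroup H] [InnerProductSpace ℝ H]
    [FiniteDimensional ℝ H]
    [NormedAddCommGroup X] [NormedSpace ℝ X] [FiniteDimensional ℝ X]
    (φ ψ : StrongDual ℝ X →L[ℝ] H)
    (hdom : ∀ x : StrongDual ℝ X, ‖ψ x‖ ≤ ‖φ x‖)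
    (horth : ∀ x : StrongDual ℝ X, ⟪ψ x, φ x⟫ = 0) :
    ∃ A : H →L[ℝ] H, ‖A‖ ≤ 1 ∧ ψ = A.comp φ ∧
      ∀ h : H,
        ⟪((Submodule.orthogonalProjectionOnto (LinearMap.range (φ : StrongDual ℝ X →ₗ[ℝ] H)) (A h)) : H), h⟫ = 0 := by
  have hker : LinearMap.ker (φ : StrongDual ℝ X →ₗ[ℝ] H) ≤
      LinearMap.ker (ψ : StrongDual ℝ X →ₗ[ℝ] H) := by
    intro x hx
    simp only [LinearMap.mem_ker, ContinuousLinearMap.coe_coe] at hx ⊢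
    have := hdom x
    rw [hx, norm_zero] at this
    exact norm_le_zero_iff.mp this
  let e := (φ : StrongDual ℝ X →ₗ[ℝ] H).quotKerEquivRange
  let ψ' := (LinearMap.ker (φ : StrongDual ℝ X →ₗ[ℝ] H)).liftQ
      (ψ : StrongDual ℝ X →ₗ[ℝ] H) hker
  let B : (LinearMap.range (φ : StrongDual ℝ X →ₗ[ℝ] H)) →ₗ[ℝ] H :=
    ψ'.comp e.symm.toLinearMap
  have hB : ∀ x : StrongDual ℝ X,
      B ⟨φ x, LinearMap.mem_range_self _ x⟩ = ψ x := by
    intro x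
    have he : e (Submodule.Quotient.mk x) = ⟨φ x, LinearMap.mem_range_self _ x⟩ :=
      Subtype.ext ((φ : StrongDual ℝ X →ₗ[ℝ] H).quotKerEquivRange_apply_mk x)
    simp only [B, LinearMap.comp_apply, LinearEquiv.coe_toLinearMap]
    rw [← he, LinearEquiv.symm_apply_apply]
    simp [ψ']
  let P := Submodule.orthogonalProjectionOnto (LinearMap.range (φ : StrongDual ℝ X →ₗ[ℝ] H))
  have hPmem : ∀ h : H, ((P h : H)) ∈ LinearMap.range (φ : StrongDual ℝ X →ₗ[ℝ] H) := by
    intro h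
    have := (P h).2
    simpa [LinearMap.mem_range] using this
  let A' : H →ₗ[ℝ] H :=
    { toFun := fun h => B ⟨(P h : H), hPmem h⟩
      map_add' := by
        intro a b
        have : (⟨(P (a + b) : H), hPmem (a+b)⟩ :
            LinearMap.range (φ : StrongDual ℝ X →ₗ[ℝ] H)) =
            ⟨(P a : H), hPmem a⟩ + ⟨(P b : H), hPmem b⟩ := by
          ext; simp
        show B ⟨(P (a + b) : H), hPmem (a+b)⟩ = B ⟨(P a : H), hPmem a⟩ + B ⟨(P b : H), hPmem b⟩
        rw [this, map_add]
      map_smul' := by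
        intro c a
        have : (⟨(P (c • a) : H), hPmem (c • a)⟩ :
            LinearMap.range (φ : StrongDual ℝ X →ₗ[ℝ] H)) =
            c • ⟨(P a : H), hPmem a⟩ := by
          ext; simp
        show B ⟨(P (c • a) : H), hPmem (c • a)⟩ = c • B ⟨(P a : H), hPmem a⟩
        rw [this, map_smul] }
  let A : H →L[ℝ] H := LinearMap.toContinuousLinearMap A'
  have hAapply : ∀ h : H, A h = B ⟨(P h : H), hPmem h⟩ := fun _ => rfl
  -- key: value of A on elements of the range
  have hAval : ∀ h : H, ∃ x : StrongDual ℝ X, φ x = (P h : H) ∧ A h = ψ x := by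
    intro h
    obtain ⟨x, hx⟩ := hPmem h
    refine ⟨x, hx, ?_⟩
    rw [hAapply]
    have : (⟨(P h : H), hPmem h⟩ :
        LinearMap.range (φ : StrongDual ℝ X →ₗ[ℝ] H)) =
        ⟨φ x, LinearMap.mem_range_self _ x⟩ := Subtype.ext hx.symm
    rw [this, hB]
  refine ⟨A, ?_, ?_, ?_⟩
  · refine ContinuousLinearMap.opNorm_le_bound A zero_le_one (fun h => ?_)
    obtain ⟨x, hx, hAx⟩ := hAval h
    rw [hAx, one_mul]
    calc ‖ψ x‖ ≤ ‖φ x‖ := hdom x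
    _ = ‖(P h : H)‖ := by rw [hx]
    _ ≤ ‖h‖ := by
        calc ‖(P h : H)‖ = ‖P h‖ := rfl
        _ ≤ ‖P‖ * ‖h‖ := P.le_opNorm h
        _ ≤ 1 * ‖h‖ := by
            gcongr; exact Submodule.orthogonalProjectionOnto_norm_le _
        _ = ‖h‖ := one_mul _
  · ext y
    obtain ⟨x, hx, hAx⟩ := hAval (φ y)
    have hP : (P (φ y) : H) = φ y := by
      simpa [P] using (Submodule.starProjection_eq_self_iff (K := LinearMap.range (φ : StrongDual ℝ X →ₗ[ℝ] H)).mpr (LinearMap.mem_range_self (φ : StrongDual ℝ X →ₗ[ℝ] H) y) : (P (φ y) : H) = φ y)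
    have hφ : φ x = φ y := by rw [hx, hP]
    have hψ : ψ x = ψ y := by
      have : x - y ∈ LinearMap.ker (φ : StrongDual ℝ X →ₗ[ℝ] H) := by
        simp [LinearMap.mem_ker, map_sub, hφ]
      have := hker this
      simp only [LinearMap.mem_ker, ContinuousLinearMap.coe_coe, map_sub,
        sub_eq_zero] at this
      exact this
    simp only [ContinuousLinearMap.comp_apply]
    rw [hAx, hψ]
  · intro h
    obtain ⟨x, hx, hAx⟩ := hAval h
    rw [hAx]
    have this : ⟪(P (ψ x) : H), h⟫ = ⟪ψ x, (P h : H)⟫ := Submodule.inner_starProjection_left_eq_right (K := LinearMap.range (φ : StrongDual ℝ X →ₗ[ℝ] H)) (ψ x) h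
    rw [this, ← hx]
    exact horth x
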